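/- Let X := {2^{2^k} : k ∈ ℕ, k ≥ 1} ⊆ ℝ, let ρ(x,y) := |x−y| for x,y ∈ X, and let μ := Σ_{k=1}^∞ 2^k·δ_{2^{2^k}} (that is, μ({2^{2^k}}) = 2^k for every k ≥ 1). Then (X,ρ,μ) is a space of homogeneous type; more precisely, for every x ∈ X and every r ∈ (0,∞), 0 < μ(B(x,2r)) ≤ 4·μ(B(x,r)) < ∞, where B(x,r) := {y ∈ X : |x−y| < r}. -/

import Mathlib

noncomputable section
open MeasureTheory Filter Set
open scoped ENNReal NNReal Topology
namespace Paper

/-- The measure `μ = Σ_{k ≥ 1} 2^k δ_{2^{2^k}}` on `ℝ` (indexed below by `k+1`, `k : ℕ`). -/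
def μX : Measure ℝ :=
  Measure.sum fun k : ℕ => ((2 : ℝ≥0∞) ^ (k + 1)) • Measure.dirac ((2 : ℝ) ^ 2 ^ (k + 1))

def xp (j : ℕ) : ℝ := 2 ^ 2 ^ (j + 1)

lemma xp_strictMono : StrictMono xp := by
  intro a b h
  exact pow_lt_pow_right₀ one_lt_two (Nat.pow_lt_pow_right one_lt_two (by omega))

lemma two_le_xp (j : ℕ) : (2:ℝ) ≤ xp j := by
  calc (2:ℝ) = 2^1 := (pow_one 2).symm
  _ ≤ 2 ^ 2 ^ (j+1) := pow_le_pow_right₀ one_le_two Nat.one_le_two_pow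

lemma xp_sq (j : ℕ) : xp (j+1) = xp j ^ 2 := by
  rw [xp, xp, show (2:ℕ)^(j+1+1) = 2^(j+1)*2 by ring, pow_mul]

lemma μX_apply {s : Set ℝ} (hs : MeasurableSet s) :
    μX s = ∑' j : ℕ, (2:ℝ≥0∞)^(j+1) * s.indicator 1 (xp j) := by
  simp [μX, Measure.sum_apply _ hs, Measure.dirac_apply' _ hs, xp]

lemma le_ball {k n : ℕ} {r : ℝ} (h : xp n ∈ Metric.ball (xp k) r) :
    (2:ℝ≥0∞)^(n+1) ≤ μX (Metric.ball (xp k) r) := by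
  rw [μX_apply Metric.isOpen_ball.measurableSet]
  calc (2:ℝ≥0∞)^(n+1) = (2:ℝ≥0∞)^(n+1) * (Metric.ball (xp k) r).indicator 1 (xp n) := by
        rw [Set.indicator_of_mem h]; simp
  _ ≤ _ := ENNReal.le_tsum n

lemma geom_le (m : ℕ) : ∑ j ∈ Finset.range (m+1), (2:ℝ≥0∞)^(j+1) ≤ 2^(m+2) := by
  induction m with
  | zero => simp; norm_num
  | succ n ih =>
      rw [Finset.sum_range_succ]
      calc _ ≤ (2:ℝ≥0∞)^(n+2) + 2^(n+2) := add_le_add_left ih _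
      _ = 2^(n+3) := by ring
      _ ≤ _ := le_refl _

lemma ball_le {k m : ℕ} {r : ℝ} (h : ∀ j, xp j ∈ Metric.ball (xp k) r → j ≤ m) :
    μX (Metric.ball (xp k) r) ≤ 2^(m+2) := by
  rw [μX_apply Metric.isOpen_ball.measurableSet]
  calc ∑' j : ℕ, (2:ℝ≥0∞)^(j+1) * (Metric.ball (xp k) r).indicator 1 (xp j)
      ≤ ∑' j : ℕ, (if j ≤ m then (2:ℝ≥0∞)^(j+1) else 0) := by
        refine Summable.tsum_le_tsum (fun j => ?_) ENNReal.summable ENNReal.summable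
        by_cases hj : xp j ∈ Metric.ball (xp k) r
        · rw [Set.indicator_of_mem hj, if_pos (h j hj)]; simp
        · rw [Set.indicator_of_notMem hj]; simp
  _ = ∑ j ∈ Finset.range (m+1), (if j ≤ m then (2:ℝ≥0∞)^(j+1) else 0) := by
        refine tsum_eq_sum (fun j hj => ?_)
        rw [if_neg (by simp only [Finset.mem_range, not_lt] at hj; omega)]
  _ ≤ ∑ j ∈ Finset.range (m+1), (2:ℝ≥0∞)^(j+1) := by
        refine Finset.sum_le_sum fun j hj => ?_
        split <;> simp
  _ ≤ _ := geom_le m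

theorem statement8 :
    (∀ k : ℕ, μX {(2 : ℝ) ^ 2 ^ (k + 1)} = 2 ^ (k + 1)) ∧
    ∀ (k : ℕ) (r : ℝ), 0 < r →
      0 < μX (Metric.ball ((2 : ℝ) ^ 2 ^ (k + 1)) (2 * r)) ∧
      μX (Metric.ball ((2 : ℝ) ^ 2 ^ (k + 1)) (2 * r)) ≤
        4 * μX (Metric.ball ((2 : ℝ) ^ 2 ^ (k + 1)) r) ∧
      μX (Metric.ball ((2 : ℝ) ^ 2 ^ (k + 1)) r) < ∞ := by
  have hxp : ∀ k : ℕ, (2 : ℝ) ^ 2 ^ (k + 1) = xp k := fun k => rfl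
  constructor
  · intro k
    rw [hxp, μX_apply (measurableSet_singleton _), tsum_eq_single k]
    · rw [Set.indicator_of_mem (Set.mem_singleton _)]; simp
    · intro j hj
      rw [Set.indicator_of_notMem (by simpa using xp_strictMono.injective.ne hj)]
      simp
  · intro k r hr
    simp only [hxp]
    -- find the largest index m with xp m < xp k + 2r
    have hex : ∃ j, xp k + 2*r ≤ xp (j+1) := by
      obtain ⟨N, hN⟩ := exists_nat_ge (xp k + 2*r)
      refine ⟨N, hN.trans ?_⟩
      have : (N : ℕ) ≤ 2 ^ 2 ^ (N+1+1) := by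
        calc N ≤ 2^N := (Nat.lt_two_pow_self (n := N)).le
        _ ≤ 2 ^ 2 ^ (N+2) := Nat.pow_le_pow_right (by norm_num)
              ((Nat.lt_two_pow_self (n := N)).le.trans (Nat.pow_le_pow_right (by norm_num) (by omega)))
      calc (N:ℝ) ≤ ((2 ^ 2 ^ (N+1+1) : ℕ) : ℝ) := by exact_mod_cast this
      _ = xp (N+1) := by rw [xp]; push_cast; ring
    set m := Nat.find hex with hm
    have hPm : xp k + 2*r ≤ xp (m+1) := Nat.find_spec hex
    have hkm : k ≤ m := by
      by_contra hc
      have : xp (m+1) ≤ xp k := xp_strictMono.monotone (by omega)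
      linarith
    have hmlt : xp m < xp k + 2*r := by
      rcases Nat.eq_or_lt_of_le hkm with h | h
      · rw [← h]; linarith
      · have hm1 : 1 ≤ m := by omega
        have := Nat.find_min hex (m := m - 1) (by omega)
        push_neg at this
        rwa [show m - 1 + 1 = m by omega] at this
    have hgt : ∀ j, m < j → xp k + 2*r ≤ xp j := fun j hj =>
      hPm.trans (xp_strictMono.monotone (by omega))
    -- membership of center
    have hball : ∀ R : ℝ, 0 < R → xp k ∈ Metric.ball (xp k) R := fun R hR => by
      simpa [Metric.mem_ball] using hR
    -- upper bound on big ball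
    have hub : μX (Metric.ball (xp k) (2*r)) ≤ 2^(m+2) := by
      refine ball_le fun j hj => ?_
      by_contra hc
      have h1 := hgt j (by omega)
      rw [Metric.mem_ball, Real.dist_eq] at hj
      have h2 : xp k ≤ xp j := xp_strictMono.monotone (by omega)
      rw [abs_of_nonneg (by linarith)] at hj
      linarith
    -- lower bound on small ball
    have hlb : (2:ℝ≥0∞)^m ≤ μX (Metric.ball (xp k) r) := by
      rcases Nat.eq_or_lt_of_le hkm with h | h
      · calc (2:ℝ≥0∞)^m ≤ 2^(k+1) := pow_le_pow_right₀ one_le_two (by omega)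
        _ ≤ _ := le_ball (hball r hr)
      · obtain ⟨n, hmn⟩ : ∃ n, m = n + 1 := ⟨m - 1, by omega⟩
        rw [hmn] at hmlt ⊢
        have hn : k ≤ n := by omega
        have h1 : xp (n+1) = xp n ^ 2 := xp_sq n
        rw [h1] at hmlt
        have h2 : (2:ℝ) ≤ xp n := two_le_xp n
        have h3 : xp k ≤ xp n := xp_strictMono.monotone hn
        have h4 : (0:ℝ) < xp k := lt_of_lt_of_le (by norm_num) (two_le_xp k)
        have hmem : xp n ∈ Metric.ball (xp k) r := by
          rw [Metric.mem_ball, Real.dist_eq, abs_of_nonneg (by linarith)]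
          nlinarith
        exact le_ball hmem
    refine ⟨?_, ?_, ?_⟩
    · calc (0:ℝ≥0∞) < 2^(k+1) := by positivity
      _ ≤ _ := le_ball (hball (2*r) (by linarith))
    · calc μX (Metric.ball (xp k) (2*r)) ≤ 2^(m+2) := hub
      _ = 4 * 2^m := by ring
      _ ≤ 4 * μX (Metric.ball (xp k) r) := mul_le_mul_right hlb 4
    · calc μX (Metric.ball (xp k) r) ≤ μX (Metric.ball (xp k) (2*r)) :=
          measure_mono (Metric.ball_subset_ball (by linarith))
      _ ≤ 2^(m+2) := hub
      _ < ∞ := by simp [ENNReal.pow_lt_top]
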